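/- Every graph with no induced P_4 either has at most one vertex, or is disconnected, or its complement is disconnected. -/

import Mathlib

open SimpleGraph

namespace P4Aux

variable {V : Type*} (G : SimpleGraph V)

lemma pat_embedding {a b c d : V}
    (hab : G.Adj a b) (hbc : G.Adj b c) (hcd : G.Adj c d)
    (hac : ¬ G.Adj a c) (had : ¬ G.Adj a d) (hbd : ¬ G.Adj b d) :
    Nonempty (pathGraph 4 ↪g G) := by
  have hba := hab.symm
  have hcb := hbc.symm
  have hdc := hcd.symm
  have hca : ¬ G.Adj c a := fun hh => hac hh.symm
  have hda : ¬ G.Adj d a := fun hh => had hh.symm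
  have hdb : ¬ G.Adj d b := fun hh => hbd hh.symm
  have hab' : a ≠ b := hab.ne
  have hbc' : b ≠ c := hbc.ne
  have hcd' : c ≠ d := hcd.ne
  have hac' : a ≠ c := by rintro rfl; exact had hcd
  have had' : a ≠ d := by rintro rfl; exact hac hcd.symm
  have hbd' : b ≠ d := by rintro rfl; exact had hab
  refine ⟨⟨⟨![a,b,c,d], ?_⟩, ?_⟩⟩
  · intro u w huw
    fin_cases u <;> fin_cases w <;>
      first
        | rfl
        | (simp only [Matrix.cons_val_zero, Matrix.cons_val_one, Matrix.head_cons,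
            Matrix.cons_val_two, Matrix.tail_cons, Matrix.cons_val_three] at huw
           first
            | exact absurd huw hab' | exact absurd huw hbc' | exact absurd huw hcd'
            | exact absurd huw hac' | exact absurd huw had' | exact absurd huw hbd'
            | exact absurd huw.symm hab' | exact absurd huw.symm hbc'
            | exact absurd huw.symm hcd' | exact absurd huw.symm hac'
            | exact absurd huw.symm had' | exact absurd huw.symm hbd')
  · intro u w
    fin_cases u <;> fin_cases w <;>
      simp [pathGraph_adj, hab, hbc, hcd, hba, hcb, hdc, hac, had, hbd,
        hca, hda, hdb, G.irrefl] <;> assumption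

/-- reachability avoiding `v` -/
def Rel (v : V) : V → V → Prop :=
  Relation.ReflTransGen (fun p q => p ≠ v ∧ q ≠ v ∧ G.Adj p q)

lemma rel_symm {v x y : V} (h : Rel G v x y) : Rel G v y x :=
  have : Std.Symm (fun p q => p ≠ v ∧ q ≠ v ∧ G.Adj p q) :=
    ⟨fun _ _ hpq => ⟨hpq.2.1, hpq.1, hpq.2.2.symm⟩⟩
  Std.Symm.symm (r := Relation.ReflTransGen (fun p q => p ≠ v ∧ q ≠ v ∧ G.Adj p q)) _ _ h

lemma exists_nbr : ∀ {u v : V}, G.Walk u v → u ≠ v →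
    ∃ d, d ≠ v ∧ Rel G v u d ∧ G.Adj v d := by
  intro u v w
  induction w with
  | nil => intro hu; exact absurd rfl hu
  | @cons p q r h w ih =>
    intro hp
    by_cases hq : q = r
    · subst hq; exact ⟨p, hp, Relation.ReflTransGen.refl, h.symm⟩
    · obtain ⟨d, hd, hrel, hadj⟩ := ih hq
      exact ⟨d, hd, Relation.ReflTransGen.head ⟨hp, hq, h⟩ hrel, hadj⟩

lemma exists_pair : ∀ {u v : V}, G.Walk u v → u ≠ v → ¬ G.Adj v u →
    ∃ a b, Rel G v u a ∧ Rel G v u b ∧ G.Adj b a ∧ G.Adj v a ∧ ¬ G.Adj v b ∧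
      a ≠ v ∧ b ≠ v := by
  intro u v w
  induction w with
  | nil => intro hu _; exact absurd rfl hu
  | @cons p q r h w ih =>
    intro hp hnadj
    have hq : q ≠ r := by rintro rfl; exact hnadj h.symm
    by_cases hrq : G.Adj r q
    · exact ⟨q, p, Relation.ReflTransGen.single ⟨hp, hq, h⟩,
        Relation.ReflTransGen.refl, h, hrq, hnadj, hq, hp⟩
    · obtain ⟨a, b, ha, hb, hba, hva, hvb, hav, hbv⟩ := ih hq hrq
      exact ⟨a, b, Relation.ReflTransGen.head ⟨hp, hq, h⟩ ha,
        Relation.ReflTransGen.head ⟨hp, hq, h⟩ hb, hba, hva, hvb, hav, hbv⟩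

lemma rel_reachable {v x y : V} (hx : x ∈ ({v}ᶜ : Set V)) (hy : y ∈ ({v}ᶜ : Set V))
    (h : Rel G v x y) : (G.induce ({v}ᶜ : Set V)).Reachable ⟨x, hx⟩ ⟨y, hy⟩ := by
  induction h with
  | refl => exact Reachable.refl _
  | @tail b c hr hstep ih =>
    obtain ⟨hb, hc, hadj⟩ := hstep
    have hb' : b ∈ ({v}ᶜ : Set V) := hb
    have hstep' : (G.induce ({v}ᶜ : Set V)).Adj ⟨b, hb'⟩ ⟨c, hy⟩ := hadj
    exact (ih hb').trans hstep'.reachable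

lemma not_pre_rel {v : V} (hdis : ¬ (G.induce ({v}ᶜ : Set V)).Preconnected) :
    ∃ x y, x ≠ v ∧ y ≠ v ∧ ¬ Rel G v x y := by
  by_contra hcon
  push_neg at hcon
  apply hdis
  rintro ⟨x, hx⟩ ⟨y, hy⟩
  exact rel_reachable G hx hy (hcon x y hx hy)

lemma lemA {v : V} (hpre : G.Preconnected)
    (hz : ∃ z, z ≠ v ∧ ¬ G.Adj v z)
    (hdis : ¬ (G.induce ({v}ᶜ : Set V)).Preconnected) :
    ∃ a b c d, G.Adj a b ∧ G.Adj b c ∧ G.Adj c d ∧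
      ¬ G.Adj a c ∧ ¬ G.Adj a d ∧ ¬ G.Adj b d := by
  obtain ⟨x, y, hx, hy, hxy⟩ := not_pre_rel G hdis
  obtain ⟨z, hzv, hvz⟩ := hz
  obtain ⟨a, b, hza, hzb, hba, hva, hvb, hav, hbv⟩ :=
    exists_pair G (hpre z v).some hzv hvz
  have hw : ∃ w, w ≠ v ∧ ¬ Rel G v z w := by
    by_cases hzx : Rel G v z x
    · exact ⟨y, hy, fun hzy => hxy ((rel_symm G hzx).trans hzy)⟩
    · exact ⟨x, hx, hzx⟩
  obtain ⟨w, hwv, hzw⟩ := hw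
  obtain ⟨d, hdv, hwd, hvd⟩ := exists_nbr G (hpre w v).some hwv
  refine ⟨b, a, v, d, hba, hva.symm, hvd, ?_, ?_, ?_⟩
  · exact fun hh => hvb hh.symm
  · intro hh
    exact hzw (hzb.trans ((Relation.ReflTransGen.single ⟨hbv, hdv, hh⟩).trans
      (rel_symm G hwd)))
  · intro hh
    exact hzw (hza.trans ((Relation.ReflTransGen.single ⟨hav, hdv, hh⟩).trans
      (rel_symm G hwd)))

lemma compl_induce (s : Set V) : (G.induce s)ᶜ = (Gᶜ).induce s := by
  ext a b
  simp only [compl_adj, comap_adj, Function.Embedding.coe_subtype, ne_eq,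
    Subtype.ext_iff]

lemma two_adj {a b : V} (hall : ∀ z : V, z = a ∨ z = b) (hab : a ≠ b)
    (hr : G.Reachable a b) : G.Adj a b := by
  obtain ⟨w⟩ := hr
  cases w with
  | nil => exact absurd rfl hab
  | @cons _ c _ h p =>
    rcases hall c with rfl | rfl
    · exact absurd h (G.irrefl)
    · exact h

lemma first_step {u w : V} (huw : u ≠ w) (hr : G.Reachable u w) :
    ∃ z, G.Adj u z := by
  obtain ⟨p⟩ := hr
  cases p with
  | nil => exact absurd rfl huw
  | cons h _ => exact ⟨_, h⟩

lemma main : ∀ (n : ℕ) (V : Type*) [Fintype V] (G : SimpleGraph V),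
    Fintype.card V = n → IsEmpty (SimpleGraph.pathGraph 4 ↪g G) →
    Fintype.card V ≤ 1 ∨ ¬ G.Preconnected ∨ ¬ (Gᶜ).Preconnected := by
  intro n
  induction n using Nat.strong_induction_on with
  | _ n ih =>
    intro V _ G hcard h
    classical
    by_contra hcon
    push_neg at hcon
    obtain ⟨h1, hG, hGc⟩ := hcon
    have h2 : 2 ≤ Fintype.card V := by omega
    by_cases hn2 : Fintype.card V = 2
    · obtain ⟨a, b, hab, huniv⟩ := (Nat.card_eq_two_iff (α := V)).mp
        (by rw [Nat.card_eq_fintype_card]; exact hn2)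
      have hall : ∀ z : V, z = a ∨ z = b := by
        intro z
        have : z ∈ ({a, b} : Set V) := huniv ▸ Set.mem_univ z
        simpa using this
      have hGadj := two_adj G hall hab (hG a b)
      have hGcadj := two_adj Gᶜ hall hab (hGc a b)
      exact hGcadj.2 hGadj
    · have h3 : 3 ≤ Fintype.card V := by omega
      have hne : Nonempty V := Fintype.card_pos_iff.mp (by omega)
      obtain ⟨v⟩ := hne
      have hcards : Fintype.card ↥({v}ᶜ : Set V) = n - 1 := by
        rw [Fintype.card_compl_set]
        simp [hcard]
      have hHfree : IsEmpty (SimpleGraph.pathGraph 4 ↪g G.induce ({v}ᶜ : Set V)) := by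
        constructor
        intro e
        exact h.elim ((Embedding.induce ({v}ᶜ : Set V)).comp e)
      have hlt : n - 1 < n := by omega
      rcases ih (n - 1) hlt ↥({v}ᶜ : Set V) (G.induce ({v}ᶜ : Set V)) hcards hHfree
        with hc | hd | hd
      · omega
      · have hz : ∃ z, z ≠ v ∧ ¬ G.Adj v z := by
          obtain ⟨u, hu⟩ := Fintype.exists_ne_of_one_lt_card (by omega) v
          obtain ⟨z, hz⟩ := first_step Gᶜ (Ne.symm hu) (hGc v u)
          have hz' := (compl_adj G v z).mp hz
          exact ⟨z, fun e => hz'.1 e.symm, hz'.2⟩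
        obtain ⟨a, b, c, d, hab, hbc, hcd, hac, had, hbd⟩ := lemA G hG hz hd
        exact h.elim (pat_embedding G hab hbc hcd hac had hbd).some
      · rw [compl_induce] at hd
        have hz : ∃ z, z ≠ v ∧ ¬ Gᶜ.Adj v z := by
          obtain ⟨u, hu⟩ := Fintype.exists_ne_of_one_lt_card (by omega) v
          obtain ⟨z, hz⟩ := first_step G (Ne.symm hu) (hG v u)
          exact ⟨z, hz.ne', fun e => e.2 hz⟩
        obtain ⟨a, b, c, d, hab, hbc, hcd, hac, had, hbd⟩ := lemA Gᶜ hGc hz hd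
        have hac' : a ≠ c := by rintro rfl; exact had hcd
        have had' : a ≠ d := by rintro rfl; exact hac hcd.symm
        have hbd' : b ≠ d := by rintro rfl; exact had hab
        have key : ∀ {p q : V}, ¬ Gᶜ.Adj p q → p ≠ q → G.Adj p q := by
          intro p q hpq hne
          by_contra h'
          exact hpq ((compl_adj G p q).mpr ⟨hne, h'⟩)
        exact h.elim (pat_embedding G (key hac hac').symm (key had had')
          (key hbd hbd').symm hcd.2 (fun hh => hbc.2 hh.symm) hab.2).some

end P4Aux

/-- Every `P₄`-free graph either has at most one vertex, or is disconnected, or its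
complement is disconnected. -/
theorem p4_free_structure {V : Type*} [Fintype V] (G : SimpleGraph V)
    (h : IsEmpty (SimpleGraph.pathGraph 4 ↪g G)) :
    Fintype.card V ≤ 1 ∨ ¬ G.Preconnected ∨ ¬ (Gᶜ).Preconnected :=
  P4Aux.main (Fintype.card V) V G rfl h
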